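/- Theorem (advantages as rewards): For every transition matrix P, all policies π and π̄, every reward function r : S × A → ℝ, every discount factor γ ∈ (0,1), and every state s ∈ S: V(π,P,r,γ)(s) − V(π,P,r̃,γ)(s) = V(π̄,P,r,γ)(s), where r̃ : S × A → ℝ is defined by r̃(s,a) = Δ(π̄,P,r,γ)(s,a). -/

import Mathlib

open Filter Finset Topology

noncomputable section

variable {S A : Type} [Fintype S] [DecidableEq S] [Fintype A] [Nonempty S] [Nonempty A]

/-- A policy assigns to each state a probability distribution over actions. -/
def IsPolicy (π : S → A → ℝ) : Prop :=
  (∀ s a, 0 ≤ π s a) ∧ ∀ s, ∑ a, π s a = 1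

/-- A transition matrix assigns to each action and state a probability distribution
over next states. -/
def IsTransition (P : A → S → S → ℝ) : Prop :=
  (∀ a s s', 0 ≤ P a s s') ∧ ∀ a s, ∑ s', P a s s' = 1

/-- The state-transition matrix induced by a policy and a transition matrix. -/
def Mmat (π : S → A → ℝ) (P : A → S → S → ℝ) : Matrix S S ℝ :=
  Matrix.of fun s s' => ∑ a, π s a * P a s s'

/-- Expected one-step reward under policy `π`. -/
def rpi (π : S → A → ℝ) (r : S × A → ℝ) (s : S) : ℝ := ∑ a, π s a * r (s, a)

/-- Discounted value function. -/
def Vval (π : S → A → ℝ) (P : A → S → S → ℝ) (r : S × A → ℝ) (γ : ℝ) (s : S) : ℝ :=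
  ∑' t : ℕ, γ ^ t * ((Mmat π P ^ t).mulVec (rpi π r)) s

/-- State-action value function. -/
def Qval (π : S → A → ℝ) (P : A → S → S → ℝ) (r : S × A → ℝ) (γ : ℝ) (s : S) (a : A) : ℝ :=
  r (s, a) + γ * ∑ s', P a s s' * Vval π P r γ s'

/-- Advantage function. -/
def Adv (π : S → A → ℝ) (P : A → S → S → ℝ) (r : S × A → ℝ) (γ : ℝ) (s : S) (a : A) : ℝ :=
  Qval π P r γ s a - Vval π P r γ s

set_option linter.unusedSectionVars false

lemma abs_mulVec_le (M : Matrix S S ℝ) (h0 : ∀ i j, 0 ≤ M i j)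
    (h1 : ∀ i, ∑ j, M i j = 1) (v : S → ℝ) (C : ℝ) (hC : ∀ s, |v s| ≤ C)
    (s : S) : |M.mulVec v s| ≤ C := by
  have h : |M.mulVec v s| ≤ ∑ j, M s j * C := by
    calc |∑ j, M s j * v j| ≤ ∑ j, |M s j * v j| := Finset.abs_sum_le_sum_abs _ _
      _ ≤ ∑ j, M s j * C := by
          apply Finset.sum_le_sum
          intro j _
          rw [abs_mul, abs_of_nonneg (h0 s j)]
          exact mul_le_mul_of_nonneg_left (hC j) (h0 s j)
  simpa [← Finset.sum_mul, h1 s] using h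

lemma abs_pow_mulVec_le (M : Matrix S S ℝ) (h0 : ∀ i j, 0 ≤ M i j)
    (h1 : ∀ i, ∑ j, M i j = 1) (v : S → ℝ) (C : ℝ) (hC : ∀ s, |v s| ≤ C)
    (t : ℕ) (s : S) : |((M ^ t).mulVec v) s| ≤ C := by
  induction t generalizing s with
  | zero => simpa [Matrix.one_mulVec] using hC s
  | succ n ih =>
      rw [pow_succ', ← Matrix.mulVec_mulVec]
      exact abs_mulVec_le M h0 h1 _ C ih s

lemma summable_geom_mulVec (M : Matrix S S ℝ) (h0 : ∀ i j, 0 ≤ M i j)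
    (h1 : ∀ i, ∑ j, M i j = 1) (v : S → ℝ) (γ : ℝ) (hγ0 : 0 < γ) (hγ1 : γ < 1)
    (s : S) : Summable (fun t : ℕ => γ ^ t * ((M ^ t).mulVec v) s) := by
  obtain ⟨C, hC⟩ : ∃ C, ∀ s, |v s| ≤ C :=
    ⟨Finset.univ.sup' Finset.univ_nonempty fun s => |v s|,
      fun s => Finset.le_sup' (fun s => |v s|) (Finset.mem_univ s)⟩
  apply Summable.of_norm_bounded (g := fun t : ℕ => C * γ ^ t)
    ((summable_geometric_of_lt_one hγ0.le hγ1).mul_left C)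
  intro t
  rw [Real.norm_eq_abs, abs_mul, abs_pow, abs_of_nonneg hγ0.le, mul_comm]
  exact mul_le_mul_of_nonneg_right (abs_pow_mulVec_le M h0 h1 v C hC t s) (pow_nonneg hγ0.le t)

/-- **Advantages as rewards.** For every transition matrix `P`, all policies `π` and `π̄`,
every reward function `r`, every discount `γ ∈ (0,1)`, and every state `s`:
`V(π,P,r,γ)(s) − V(π,P,r̃,γ)(s) = V(π̄,P,r,γ)(s)` where `r̃ = Δ(π̄,P,r,γ)`. -/
theorem advantages_as_rewards
    (P : A → S → S → ℝ) (π πbar : S → A → ℝ)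
    (hP : IsTransition P) (hπ : IsPolicy π) (hπbar : IsPolicy πbar)
    (r : S × A → ℝ) (γ : ℝ) (hγ : γ ∈ Set.Ioo (0 : ℝ) 1) (s : S) :
    Vval π P r γ s - Vval π P (fun p => Adv πbar P r γ p.1 p.2) γ s
      = Vval πbar P r γ s := by
  obtain ⟨hγ0, hγ1⟩ := hγ
  set M := Mmat π P with hMdef
  set Vb : S → ℝ := Vval πbar P r γ with hVbdef
  have hM0 : ∀ i j, 0 ≤ M i j := fun i j =>
    Finset.sum_nonneg fun a _ => mul_nonneg (hπ.1 i a) (hP.1 a i j)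
  have hM1 : ∀ i, ∑ j, M i j = 1 := by
    intro i
    have : ∑ j, ∑ a, π i a * P a i j = ∑ a, ∑ j, π i a * P a i j := Finset.sum_comm
    simp only [hMdef, Mmat, Matrix.of_apply]
    rw [this]
    simp only [← Finset.mul_sum, hP.2, mul_one, hπ.2]
  -- rewrite the modified one-step reward
  have hrpi : rpi π (fun p => Adv πbar P r γ p.1 p.2)
      = fun s' => rpi π r s' + γ * (M.mulVec Vb) s' - Vb s' := by
    funext s'
    simp only [rpi, Adv, Qval]
    have e1 : ∑ a, π s' a * (r (s', a) + γ * ∑ t, P a s' t * Vb t - Vb s')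
        = (∑ a, π s' a * r (s', a)) + γ * (∑ a, π s' a * ∑ t, P a s' t * Vb t)
          - (∑ a, π s' a) * Vb s' := by
      rw [Finset.mul_sum, Finset.sum_mul, ← Finset.sum_add_distrib, ← Finset.sum_sub_distrib]
      exact Finset.sum_congr rfl fun a _ => by ring
    rw [e1, hπ.2 s']
    have e2 : ∑ a, π s' a * ∑ t, P a s' t * Vb t = M.mulVec Vb s' := by
      rw [Matrix.mulVec, dotProduct]
      simp only [hMdef, Mmat, Matrix.of_apply, Finset.sum_mul, Finset.mul_sum]
      rw [Finset.sum_comm]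
      congr 1; funext a; congr 1; funext t; ring
    rw [e2, one_mul]
  -- summability facts
  have hsum : ∀ v : S → ℝ, Summable (fun t : ℕ => γ ^ t * ((M ^ t).mulVec v) s) :=
    fun v => summable_geom_mulVec M hM0 hM1 v γ hγ0 hγ1 s
  set f : ℕ → ℝ := fun t => γ ^ t * ((M ^ t).mulVec (rpi π r)) s with hf
  set g : ℕ → ℝ := fun t => γ ^ t * ((M ^ t).mulVec Vb) s with hg
  have hsf : Summable f := hsum _
  have hsg : Summable g := hsum _
  have hsg1 : Summable (fun t => g (t + 1)) := (summable_nat_add_iff 1).2 hsg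
  -- pointwise identity of the terms
  have hterm : ∀ t : ℕ, γ ^ t * ((M ^ t).mulVec (rpi π (fun p => Adv πbar P r γ p.1 p.2))) s
      = f t + (g (t + 1) - g t) := by
    intro t
    rw [hrpi]
    have hlin : (M ^ t).mulVec (fun s' => rpi π r s' + γ * (M.mulVec Vb) s' - Vb s') s
        = (M ^ t).mulVec (rpi π r) s + γ * ((M ^ (t + 1)).mulVec Vb) s
          - (M ^ t).mulVec Vb s := by
      have : (fun s' => rpi π r s' + γ * (M.mulVec Vb) s' - Vb s')
          = rpi π r + γ • (M.mulVec Vb) - Vb := by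
        funext s'; simp [Pi.add_apply, Pi.sub_apply, Pi.smul_apply, smul_eq_mul]
      rw [this, Matrix.mulVec_sub, Matrix.mulVec_add, Matrix.mulVec_smul]
      have : (M ^ t).mulVec (M.mulVec Vb) = (M ^ (t + 1)).mulVec Vb := by
        rw [Matrix.mulVec_mulVec, ← pow_succ]
      simp [this, Pi.add_apply, Pi.sub_apply, Pi.smul_apply, smul_eq_mul]
    rw [hlin, hf, hg]
    ring
  -- compute the modified value
  have hVmod : Vval π P (fun p => Adv πbar P r γ p.1 p.2) γ s
      = Vval π P r γ s - Vb s := by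
    have : Vval π P (fun p => Adv πbar P r γ p.1 p.2) γ s
        = ∑' t : ℕ, (f t + (g (t + 1) - g t)) := by
      unfold Vval
      exact tsum_congr hterm
    rw [this, Summable.tsum_add hsf (hsg1.sub hsg), Summable.tsum_sub hsg1 hsg]
    have hshift : ∑' t : ℕ, g (t + 1) = (∑' t, g t) - g 0 := by
      rw [Summable.tsum_eq_zero_add hsg]; ring
    have hg0 : g 0 = Vb s := by simp [hg, Matrix.one_mulVec]
    have hVf : Vval π P r γ s = ∑' t, f t := rfl
    rw [hshift, hg0, hVf]
    ring
  rw [hVmod]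
  ring
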